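/- Let A, B ∈ ℝ^{d×d}, K ≥ 1, W_K = ∑_{k=0}^{K-1} A^k B B^⊤ (A^⊤)^k, and suppose: (i) ‖A − I‖₂ ≤ ε for some 0 ≤ ε < 1 (ε-straight transition), and (ii) there are 0 < m_B ≤ M_B with ‖B‖₂ ≤ M_B and ‖B^⊤ u‖₂ ≥ m_B ‖u‖₂ for all u ∈ ℝ^d. Then W_K is positive definite and for all unit vectors x, y ∈ ℝ^d, x^⊤ W_K x ≤ (M_B/m_B)² ((1+ε)/(1−ε))^{2(K−1)} · y^⊤ W_K y; in particular λ_max(W_K)/λ_min(W_K) ≤ (M_B/m_B)² ((1+ε)/(1−ε))^{2(K−1)}. -/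

import Mathlib

open Matrix
open scoped InnerProductSpace

noncomputable def mulVecE {m n : ℕ} (A : Matrix (Fin m) (Fin n) ℝ)
    (x : EuclideanSpace ℝ (Fin n)) : EuclideanSpace ℝ (Fin m) :=
  Matrix.toEuclideanLin A x

noncomputable def l2OpNorm {m n : ℕ} (A : Matrix (Fin m) (Fin n) ℝ) : ℝ :=
  ‖LinearMap.toContinuousLinearMap (Matrix.toEuclideanLin A)‖

section AuxLemmas
variable {d : ℕ}

lemma mulVecE_apply (M : Matrix (Fin d) (Fin d) ℝ) (x : EuclideanSpace ℝ (Fin d)) :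
    mulVecE M x = (WithLp.equiv 2 (Fin d → ℝ)).symm (M *ᵥ (WithLp.equiv 2 (Fin d → ℝ) x)) := rfl

lemma inner_mulVecE (M : Matrix (Fin d) (Fin d) ℝ) (x y : EuclideanSpace ℝ (Fin d)) :
    ⟪mulVecE Mᵀ x, y⟫_ℝ = ⟪x, mulVecE M y⟫_ℝ := by
  rw [show Mᵀ = Mᴴ from (Matrix.conjTranspose_eq_transpose_of_trivial M).symm]
  rw [mulVecE, mulVecE, Matrix.toEuclideanLin_conjTranspose_eq_adjoint]
  exact LinearMap.adjoint_inner_left _ y x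

lemma mulVecE_mul (M N : Matrix (Fin d) (Fin d) ℝ) (x : EuclideanSpace ℝ (Fin d)) :
    mulVecE (M * N) x = mulVecE M (mulVecE N x) := by
  simp [mulVecE_apply, Matrix.mulVec_mulVec]

lemma mulVecE_one (x : EuclideanSpace ℝ (Fin d)) : mulVecE 1 x = x := by
  simp [mulVecE_apply]

lemma mulVecE_add (M N : Matrix (Fin d) (Fin d) ℝ) (x : EuclideanSpace ℝ (Fin d)) :
    mulVecE (M + N) x = mulVecE M x + mulVecE N x := by
  simp [mulVecE, map_add]

lemma mulVecE_sum (s : Finset ℕ) (f : ℕ → Matrix (Fin d) (Fin d) ℝ)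
    (x : EuclideanSpace ℝ (Fin d)) :
    mulVecE (∑ k ∈ s, f k) x = ∑ k ∈ s, mulVecE (f k) x := by
  simp [mulVecE, map_sum]

lemma mulVecE_smul (c : ℝ) (M : Matrix (Fin d) (Fin d) ℝ) (x : EuclideanSpace ℝ (Fin d)) :
    mulVecE M (c • x) = c • mulVecE M x := by
  simp [mulVecE, _root_.map_smul]

lemma norm_mulVecE_le (M : Matrix (Fin d) (Fin d) ℝ) (x : EuclideanSpace ℝ (Fin d)) :
    ‖mulVecE M x‖ ≤ l2OpNorm M * ‖x‖ :=
  (LinearMap.toContinuousLinearMap (Matrix.toEuclideanLin M)).le_opNorm x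

lemma norm_mulVecE_transpose_le (M : Matrix (Fin d) (Fin d) ℝ) (x : EuclideanSpace ℝ (Fin d)) :
    ‖mulVecE Mᵀ x‖ ≤ l2OpNorm M * ‖x‖ := by
  have h0 : 0 ≤ l2OpNorm M := norm_nonneg _
  have key : ‖mulVecE Mᵀ x‖ ^ 2 ≤ (l2OpNorm M * ‖x‖) * ‖mulVecE Mᵀ x‖ := by
    have h1 : ⟪mulVecE Mᵀ x, mulVecE Mᵀ x⟫_ℝ = ‖mulVecE Mᵀ x‖ ^ 2 :=
      real_inner_self_eq_norm_sq _
    rw [← h1, inner_mulVecE]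
    calc ⟪x, mulVecE M (mulVecE Mᵀ x)⟫_ℝ ≤ ‖x‖ * ‖mulVecE M (mulVecE Mᵀ x)‖ :=
          real_inner_le_norm _ _
      _ ≤ ‖x‖ * (l2OpNorm M * ‖mulVecE Mᵀ x‖) :=
          mul_le_mul_of_nonneg_left (norm_mulVecE_le _ _) (norm_nonneg _)
      _ = (l2OpNorm M * ‖x‖) * ‖mulVecE Mᵀ x‖ := by ring
  rcases eq_or_lt_of_le (norm_nonneg (mulVecE Mᵀ x)) with h | h
  · rw [← h]; positivity
  · nlinarith

lemma step_up {A : Matrix (Fin d) (Fin d) ℝ} {ε : ℝ} (hA : l2OpNorm (A - 1) ≤ ε)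
    (u : EuclideanSpace ℝ (Fin d)) : ‖mulVecE Aᵀ u‖ ≤ (1 + ε) * ‖u‖ := by
  have hd : Aᵀ = 1 + (A - 1)ᵀ := by
    rw [Matrix.transpose_sub, Matrix.transpose_one]; abel
  have hw : ‖mulVecE (A - 1)ᵀ u‖ ≤ ε * ‖u‖ :=
    le_trans (norm_mulVecE_transpose_le _ _) (mul_le_mul_of_nonneg_right hA (norm_nonneg _))
  rw [hd, mulVecE_add, mulVecE_one]
  calc ‖u + mulVecE (A - 1)ᵀ u‖ ≤ ‖u‖ + ‖mulVecE (A - 1)ᵀ u‖ := norm_add_le _ _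
    _ ≤ ‖u‖ + ε * ‖u‖ := by linarith
    _ = (1 + ε) * ‖u‖ := by ring

lemma step_lo {A : Matrix (Fin d) (Fin d) ℝ} {ε : ℝ} (hA : l2OpNorm (A - 1) ≤ ε)
    (u : EuclideanSpace ℝ (Fin d)) : (1 - ε) * ‖u‖ ≤ ‖mulVecE Aᵀ u‖ := by
  have hd : Aᵀ = 1 + (A - 1)ᵀ := by
    rw [Matrix.transpose_sub, Matrix.transpose_one]; abel
  have hw : ‖mulVecE (A - 1)ᵀ u‖ ≤ ε * ‖u‖ :=
    le_trans (norm_mulVecE_transpose_le _ _) (mul_le_mul_of_nonneg_right hA (norm_nonneg _))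
  rw [hd, mulVecE_add, mulVecE_one]
  have h2 : ‖u‖ ≤ ‖u + mulVecE (A - 1)ᵀ u‖ + ‖mulVecE (A - 1)ᵀ u‖ := by
    have := norm_add_le (u + mulVecE (A - 1)ᵀ u) (-(mulVecE (A - 1)ᵀ u))
    simpa using this
  linarith

lemma pow_up {A : Matrix (Fin d) (Fin d) ℝ} {ε : ℝ} (hε0 : 0 ≤ ε)
    (hA : l2OpNorm (A - 1) ≤ ε) (k : ℕ) (x : EuclideanSpace ℝ (Fin d)) :
    ‖mulVecE (Aᵀ ^ k) x‖ ≤ (1 + ε) ^ k * ‖x‖ := by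
  induction k with
  | zero => simp [mulVecE_one]
  | succ k ih =>
      rw [pow_succ', mulVecE_mul]
      calc ‖mulVecE Aᵀ (mulVecE (Aᵀ ^ k) x)‖ ≤ (1 + ε) * ‖mulVecE (Aᵀ ^ k) x‖ := step_up hA _
        _ ≤ (1 + ε) * ((1 + ε) ^ k * ‖x‖) :=
            mul_le_mul_of_nonneg_left ih (by linarith)
        _ = (1 + ε) ^ (k + 1) * ‖x‖ := by ring

lemma pow_lo {A : Matrix (Fin d) (Fin d) ℝ} {ε : ℝ} (hε1 : ε < 1)
    (hA : l2OpNorm (A - 1) ≤ ε) (k : ℕ) (x : EuclideanSpace ℝ (Fin d)) :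
    (1 - ε) ^ k * ‖x‖ ≤ ‖mulVecE (Aᵀ ^ k) x‖ := by
  induction k with
  | zero => simp [mulVecE_one]
  | succ k ih =>
      rw [show Aᵀ ^ (k + 1) = Aᵀ * Aᵀ ^ k from pow_succ' Aᵀ k, mulVecE_mul]
      calc (1 - ε) ^ (k + 1) * ‖x‖ = (1 - ε) * ((1 - ε) ^ k * ‖x‖) := by ring
        _ ≤ (1 - ε) * ‖mulVecE (Aᵀ ^ k) x‖ :=
            mul_le_mul_of_nonneg_left ih (by linarith)
        _ ≤ ‖mulVecE Aᵀ (mulVecE (Aᵀ ^ k) x)‖ := step_lo hA _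

lemma inner_eq_dot (M : Matrix (Fin d) (Fin d) ℝ) (v : Fin d → ℝ) :
    ⟪(WithLp.equiv 2 (Fin d → ℝ)).symm v,
      mulVecE M ((WithLp.equiv 2 (Fin d → ℝ)).symm v)⟫_ℝ = v ⬝ᵥ (M *ᵥ v) := by
  simp [mulVecE_apply, PiLp.inner_apply, RCLike.inner_apply, dotProduct, mul_comm]

end AuxLemmas

theorem eps_straight_gramian_condition_number {d : ℕ}
    (A B : Matrix (Fin d) (Fin d) ℝ)
    (K : ℕ) (hK : 1 ≤ K) (ε : ℝ) (hε0 : 0 ≤ ε) (hε1 : ε < 1)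
    (hA : l2OpNorm (A - 1) ≤ ε)
    (MB mB : ℝ) (hmB : 0 < mB) (hBm : mB ≤ MB)
    (hB : l2OpNorm B ≤ MB)
    (hBlow : ∀ u : EuclideanSpace ℝ (Fin d), mB * ‖u‖ ≤ ‖mulVecE Bᵀ u‖)
    (W : Matrix (Fin d) (Fin d) ℝ)
    (hW : W = ∑ k ∈ Finset.range K, A ^ k * B * Bᵀ * Aᵀ ^ k) :
    W.PosDef
    ∧ (∀ x y : EuclideanSpace ℝ (Fin d), ‖x‖ = 1 → ‖y‖ = 1 →
      ⟪x, mulVecE W x⟫_ℝ ≤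
        (MB / mB) ^ 2 * ((1 + ε) / (1 - ε)) ^ (2 * (K - 1)) * ⟪y, mulVecE W y⟫_ℝ)
    ∧ (∀ μ ν : ℝ, Module.End.HasEigenvalue W.mulVecLin μ →
        Module.End.HasEigenvalue W.mulVecLin ν →
      μ ≤ (MB / mB) ^ 2 * ((1 + ε) / (1 - ε)) ^ (2 * (K - 1)) * ν) := by
  have h1ε : (0:ℝ) < 1 - ε := by linarith
  have hMB0 : 0 < MB := lt_of_lt_of_le hmB hBm
  set C : ℝ := (MB / mB) ^ 2 * ((1 + ε) / (1 - ε)) ^ (2 * (K - 1)) with hC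
  have hC0 : 0 ≤ C := by positivity
  -- quadratic form formula
  have hq : ∀ x : EuclideanSpace ℝ (Fin d), ⟪x, mulVecE W x⟫_ℝ
      = ∑ k ∈ Finset.range K, ‖mulVecE Bᵀ (mulVecE (Aᵀ ^ k) x)‖ ^ 2 := by
    intro x
    rw [hW, mulVecE_sum, inner_sum]
    refine Finset.sum_congr rfl fun k _ => ?_
    have htr : (A ^ k * B)ᵀ = Bᵀ * Aᵀ ^ k := by
      rw [Matrix.transpose_mul, Matrix.transpose_pow]
    have hterm : A ^ k * B * Bᵀ * Aᵀ ^ k = (A ^ k * B) * (A ^ k * B)ᵀ := by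
      rw [htr, mul_assoc]
    rw [hterm, mulVecE_mul, ← inner_mulVecE, real_inner_self_eq_norm_sq, htr, mulVecE_mul]
  -- upper bound on quadratic form
  set Sp : ℝ := ∑ k ∈ Finset.range K, ((1 + ε) ^ k) ^ 2 with hSp
  set Sm : ℝ := ∑ k ∈ Finset.range K, ((1 - ε) ^ k) ^ 2 with hSm
  have hup : ∀ x : EuclideanSpace ℝ (Fin d),
      ⟪x, mulVecE W x⟫_ℝ ≤ MB ^ 2 * Sp * ‖x‖ ^ 2 := by
    intro x
    rw [hq x, hSp, Finset.mul_sum, Finset.sum_mul]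
    refine Finset.sum_le_sum fun k _ => ?_
    have h1 : ‖mulVecE Bᵀ (mulVecE (Aᵀ ^ k) x)‖ ≤ MB * ((1 + ε) ^ k * ‖x‖) := by
      calc ‖mulVecE Bᵀ (mulVecE (Aᵀ ^ k) x)‖ ≤ MB * ‖mulVecE (Aᵀ ^ k) x‖ :=
            le_trans (norm_mulVecE_transpose_le _ _)
              (mul_le_mul_of_nonneg_right hB (norm_nonneg _))
        _ ≤ MB * ((1 + ε) ^ k * ‖x‖) :=
            mul_le_mul_of_nonneg_left (pow_up hε0 hA k x) (le_of_lt hMB0)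
    calc ‖mulVecE Bᵀ (mulVecE (Aᵀ ^ k) x)‖ ^ 2 ≤ (MB * ((1 + ε) ^ k * ‖x‖)) ^ 2 :=
          pow_le_pow_left₀ (norm_nonneg _) h1 2
      _ = MB ^ 2 * ((1 + ε) ^ k) ^ 2 * ‖x‖ ^ 2 := by ring
  -- lower bound on quadratic form
  have hlo : ∀ x : EuclideanSpace ℝ (Fin d),
      mB ^ 2 * Sm * ‖x‖ ^ 2 ≤ ⟪x, mulVecE W x⟫_ℝ := by
    intro x
    rw [hq x, hSm, Finset.mul_sum, Finset.sum_mul]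
    refine Finset.sum_le_sum fun k _ => ?_
    have h1 : mB * ((1 - ε) ^ k * ‖x‖) ≤ ‖mulVecE Bᵀ (mulVecE (Aᵀ ^ k) x)‖ := by
      calc mB * ((1 - ε) ^ k * ‖x‖) ≤ mB * ‖mulVecE (Aᵀ ^ k) x‖ :=
            mul_le_mul_of_nonneg_left (pow_lo hε1 hA k x) (le_of_lt hmB)
        _ ≤ ‖mulVecE Bᵀ (mulVecE (Aᵀ ^ k) x)‖ := hBlow _
    have h0 : 0 ≤ mB * ((1 - ε) ^ k * ‖x‖) := by positivity
    calc mB ^ 2 * ((1 - ε) ^ k) ^ 2 * ‖x‖ ^ 2 = (mB * ((1 - ε) ^ k * ‖x‖)) ^ 2 := by ring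
      _ ≤ ‖mulVecE Bᵀ (mulVecE (Aᵀ ^ k) x)‖ ^ 2 := pow_le_pow_left₀ h0 h1 2
  -- sum comparison
  have hR1 : 1 ≤ (1 + ε) / (1 - ε) := by
    rw [le_div_iff₀ h1ε]; linarith
  have hsum : Sp ≤ ((1 + ε) / (1 - ε)) ^ (2 * (K - 1)) * Sm := by
    rw [hSp, hSm, Finset.mul_sum]
    refine Finset.sum_le_sum fun k hk => ?_
    have hkK : 2 * k ≤ 2 * (K - 1) := by
      have := Finset.mem_range.mp hk; omega
    have h1 : (1 + ε) ^ k = ((1 + ε) / (1 - ε)) ^ k * (1 - ε) ^ k := by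
      rw [← mul_pow, div_mul_cancel₀ _ (ne_of_gt h1ε)]
    rw [h1, mul_pow, ← pow_mul, ← pow_mul, mul_comm k 2]
    exact mul_le_mul_of_nonneg_right (pow_le_pow_right₀ hR1 hkK)
      (by positivity)
  -- part 2
  have part2 : ∀ x y : EuclideanSpace ℝ (Fin d), ‖x‖ = 1 → ‖y‖ = 1 →
      ⟪x, mulVecE W x⟫_ℝ ≤ C * ⟪y, mulVecE W y⟫_ℝ := by
    intro x y hx hy
    have h1 : ⟪x, mulVecE W x⟫_ℝ ≤ MB ^ 2 * Sp := by
      have := hup x; rw [hx] at this; simpa using this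
    have h2 : mB ^ 2 * Sm ≤ ⟪y, mulVecE W y⟫_ℝ := by
      have := hlo y; rw [hy] at this; simpa using this
    have h3 : MB ^ 2 * Sp ≤ C * (mB ^ 2 * Sm) := by
      have hCC : C * (mB ^ 2 * Sm) = MB ^ 2 * (((1 + ε) / (1 - ε)) ^ (2 * (K - 1)) * Sm) := by
        rw [hC]; field_simp
      rw [hCC]
      exact mul_le_mul_of_nonneg_left hsum (by positivity)
    calc ⟪x, mulVecE W x⟫_ℝ ≤ MB ^ 2 * Sp := h1
      _ ≤ C * (mB ^ 2 * Sm) := h3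
      _ ≤ C * ⟪y, mulVecE W y⟫_ℝ := mul_le_mul_of_nonneg_left h2 hC0
  -- positivity of the form
  have hqpos : ∀ x : EuclideanSpace ℝ (Fin d), x ≠ 0 → 0 < ⟪x, mulVecE W x⟫_ℝ := by
    intro x hx
    have hx0 : 0 < ‖x‖ := norm_pos_iff.mpr hx
    have hSm0 : 0 < Sm := by
      rw [hSm]
      refine Finset.sum_pos (fun k _ => by positivity) ?_
      exact ⟨0, Finset.mem_range.mpr (by omega)⟩
    exact lt_of_lt_of_le
      (mul_pos (mul_pos (pow_pos hmB 2) hSm0) (pow_pos hx0 2)) (hlo x)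
  -- PosDef
  have hherm : W.IsHermitian := by
    rw [hW]
    refine Finset.sum_induction _ _ (fun a b ha hb => Matrix.IsHermitian.add ha hb)
      Matrix.isHermitian_zero (fun k _ => ?_)
    have hterm : A ^ k * B * Bᵀ * Aᵀ ^ k = (A ^ k * B) * (A ^ k * B)ᴴ := by
      rw [Matrix.conjTranspose_eq_transpose_of_trivial, Matrix.transpose_mul,
        Matrix.transpose_pow, mul_assoc]
    rw [hterm]
    exact Matrix.isHermitian_mul_conjTranspose_self _
  have hposdef : W.PosDef := by
    refine Matrix.PosDef.of_dotProduct_mulVec_pos hherm fun v hv => ?_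
    have hv' : (WithLp.equiv 2 (Fin d → ℝ)).symm v ≠ 0 := by
      intro h
      apply hv
      have := congrArg (WithLp.equiv 2 (Fin d → ℝ)) h
      simpa using this
    have := hqpos _ hv'
    rw [inner_eq_dot] at this
    simpa using this
  -- eigenvalue clause
  have key : ∀ μ : ℝ, Module.End.HasEigenvalue W.mulVecLin μ →
      ∃ x : EuclideanSpace ℝ (Fin d), ‖x‖ = 1 ∧ ⟪x, mulVecE W x⟫_ℝ = μ := by
    intro μ hμ
    obtain ⟨v, hv⟩ := hμ.exists_hasEigenvector
    set v' : EuclideanSpace ℝ (Fin d) := (WithLp.equiv 2 (Fin d → ℝ)).symm v with hv'def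
    have hv'0 : v' ≠ 0 := by
      intro h
      apply hv.2
      have := congrArg (WithLp.equiv 2 (Fin d → ℝ)) h
      simpa [hv'def] using this
    have hnv : 0 < ‖v'‖ := norm_pos_iff.mpr hv'0
    have heig : mulVecE W v' = μ • v' := by
      have h1 : W *ᵥ v = μ • v := by
        have := hv.apply_eq_smul
        simpa [Matrix.mulVecLin_apply] using this
      rw [hv'def, mulVecE_apply]
      simp [h1]
    refine ⟨‖v'‖⁻¹ • v', ?_, ?_⟩
    · rw [norm_smul, norm_inv, norm_norm, inv_mul_cancel₀ (ne_of_gt hnv)]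
    · have hnv' : ‖v'‖ ≠ 0 := ne_of_gt hnv
      rw [mulVecE_smul, heig, real_inner_smul_left, real_inner_smul_right,
        real_inner_smul_right, real_inner_self_eq_norm_sq]
      field_simp
  refine ⟨hposdef, part2, fun μ ν hμ hν => ?_⟩
  obtain ⟨x, hx1, hx2⟩ := key μ hμ
  obtain ⟨y, hy1, hy2⟩ := key ν hν
  have := part2 x y hx1 hy1
  rw [hx2, hy2] at this
  exact this
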